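/- Let N ≥ 2 and let η_1, …, η_{2N} be elements of an associative unital ℂ-algebra, indexed cyclically mod 2N, satisfying η_j η_{j+1} = −η_{j+1} η_j for all j, η_j η_k = η_k η_j whenever k ≢ j±1 (mod 2N), and η_j² = 1 for all j. Define A₀ = Σ_{j=1}^{N} η_{2j−1} and A₁ = Σ_{j=1}^{N} η_{2j}. Then A₀ and A₁ satisfy the Dolan–Grady condition with constant C = 16, i.e. [A₀,[A₀,[A₀,A₁]]] = 16·[A₀,A₁] and [A₁,[A₁,[A₁,A₀]]] = 16·[A₁,A₀]. -/

import Mathlib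

lemma dg_lie_sum {A : Type*} [Ring A] {ι : Type*} (x : A) (s : Finset ι) (f : ι → A) :
    ⁅x, ∑ i ∈ s, f i⁆ = ∑ i ∈ s, ⁅x, f i⁆ := by
  simp [Ring.lie_def, Finset.mul_sum, Finset.sum_mul, Finset.sum_sub_distrib]

lemma dg_sum_lie {A : Type*} [Ring A] {ι : Type*} (x : A) (s : Finset ι) (f : ι → A) :
    ⁅∑ i ∈ s, f i, x⁆ = ∑ i ∈ s, ⁅f i, x⁆ := by
  simp [Ring.lie_def, Finset.mul_sum, Finset.sum_mul, Finset.sum_sub_distrib]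

lemma dg_key (N : ℕ) (hN : 2 ≤ N) [NeZero N] (A : Type*) [Ring A]
    (a b : ZMod N → A)
    (haa : ∀ i k, a i * a k = a k * a i)
    (hsq : ∀ i, a i * a i = 1)
    (hab1 : ∀ j, b j * a j = -(a j * b j))
    (hab2 : ∀ j, b j * a (j+1) = -(a (j+1) * b j))
    (hab3 : ∀ i j, i ≠ j → i ≠ j + 1 → a i * b j = b j * a i) :
    ∀ j, ⁅∑ i, a i, ⁅∑ i, a i, ⁅∑ i, a i, b j⁆⁆⁆ = 16 * ⁅∑ i, a i, b j⁆ := by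
  intro j
  set S : A := ∑ i, a i with hS
  have hone : (1 : ZMod N) ≠ 0 := by
    haveI : Fact (1 < N) := ⟨hN⟩
    exact one_ne_zero
  have hjj : j ≠ j + 1 := fun h => hone (by linear_combination -h)
  have hfac : ∀ y : A, S * y = y * S → ∀ z : A, ⁅S, y * z⁆ = y * ⁅S, z⁆ := by
    intro y hy z
    rw [Ring.lie_def, Ring.lie_def, ← mul_assoc, hy, mul_assoc, mul_assoc, ← mul_sub]
  have hSa : ∀ y : A, (∀ i, y * a i = a i * y) → S * y = y * S := by
    intro y hy
    rw [hS, Finset.sum_mul, Finset.mul_sum]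
    exact Finset.sum_congr rfl fun i _ => (hy i).symm
  set x : A := a j + a (j+1) with hx
  set u : A := a j * a (j+1) with hu
  have hxa : ∀ i, x * a i = a i * x := by
    intro i; rw [hx, add_mul, mul_add, haa j i, haa (j+1) i]
  have hua : ∀ i, u * a i = a i * u := by
    intro i
    rw [hu, mul_assoc, haa (j+1) i, ← mul_assoc, haa j i, mul_assoc]
  have step1 : ⁅S, b j⁆ = 2 * (x * b j) := by
    rw [hS, dg_sum_lie]
    have hterm : ∀ i : ZMod N, ⁅a i, b j⁆ =
        (if i = j then 2*(a j * b j) else 0) + (if i = j + 1 then 2*(a (j+1) * b j) else 0) := by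
      intro i
      by_cases h1 : i = j
      · subst h1
        rw [if_pos rfl, if_neg hjj, add_zero, Ring.lie_def, hab1, sub_neg_eq_add, two_mul]
      · by_cases h2 : i = j + 1
        · subst h2
          rw [if_neg h1, if_pos rfl, zero_add, Ring.lie_def, hab2, sub_neg_eq_add, two_mul]
        · rw [if_neg h1, if_neg h2, add_zero, Ring.lie_def, hab3 i j h1 h2, sub_self]
    rw [Finset.sum_congr rfl fun i _ => hterm i, Finset.sum_add_distrib,
      Finset.sum_ite_eq' Finset.univ j, Finset.sum_ite_eq' Finset.univ (j+1),
      if_pos (Finset.mem_univ _), if_pos (Finset.mem_univ _), hx]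
    noncomm_ring
  have hSx : S * (2*x) = (2*x) * S :=
    hSa _ fun i => (Commute.mul_left (Commute.ofNat_left 2 (a i))
      (hxa i : Commute x (a i))).eq
  have hSu : S * (8*u) = (8*u) * S :=
    hSa _ fun i => (Commute.mul_left (Commute.ofNat_left 8 (a i))
      (hua i : Commute u (a i))).eq
  have hS8 : S * (8:A) = (8:A) * S := ((Commute.ofNat_left 8 S).eq).symm
  have hxx : x * x = 2 + 2 * u := by
    rw [hx, hu, add_mul, mul_add, mul_add, hsq, hsq, haa (j+1) j]
    noncomm_ring <;> simp [nsmul_eq_mul] <;> abel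
  have hux : u * x = x := by
    rw [hx, hu, mul_add, mul_assoc, haa (j+1) j, ← mul_assoc, hsq j, one_mul,
      mul_assoc, hsq (j+1), mul_one]
    exact add_comm _ _
  have step2 : ⁅S, ⁅S, b j⁆⁆ = 8 * (b j) + (8 * u) * b j := by
    rw [step1, ← mul_assoc, hfac (2*x) hSx, step1]
    have h4 : 2 * x * (2 * (x * b j)) = 4 * ((x*x) * b j) := by
      noncomm_ring <;> simp [nsmul_eq_mul] <;> abel
    rw [h4, hxx]
    noncomm_ring <;> simp [nsmul_eq_mul] <;> abel
  calc ⁅S, ⁅S, ⁅S, b j⁆⁆⁆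
      = 8 * ⁅S, b j⁆ + (8 * u) * ⁅S, b j⁆ := by
        rw [step2, show ⁅S, 8 * b j + 8 * u * b j⁆ = ⁅S, 8 * b j⁆ + ⁅S, 8 * u * b j⁆ by
            rw [Ring.lie_def, Ring.lie_def, Ring.lie_def, mul_add, add_mul]; abel,
          hfac 8 hS8, hfac _ hSu]
    _ = 16 * ⁅S, b j⁆ := by
        rw [step1]
        have h1 : (8*u)*(2*(x*b j)) = 16*((u*x)*b j) := by
          noncomm_ring <;> simp [nsmul_eq_mul] <;> abel
        rw [h1, hux]
        noncomm_ring <;> simp [nsmul_eq_mul] <;> abel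

lemma dg_two_mul_ne_one (N : ℕ) (z : ZMod (2*N)) : 2 * z ≠ 1 := by
  intro h
  have h1 := congrArg (ZMod.castHom (dvd_mul_right 2 N) (ZMod 2)) h
  rw [map_mul, map_one, map_ofNat] at h1
  rw [show (2 : ZMod 2) = 0 by decide, zero_mul] at h1
  exact absurd h1 (by decide)

lemma dg_inj (N : ℕ) [NeZero N] (i k : ZMod N)
    (h : 2 * ((i.val : ℕ) : ZMod (2*N)) = 2 * ((k.val : ℕ) : ZMod (2*N))) : i = k := by
  haveI : NeZero (2*N) := ⟨by have := NeZero.ne N; omega⟩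
  have h2 : (((2*i.val : ℕ)) : ZMod (2*N)) = ((2*k.val : ℕ) : ZMod (2*N)) := by
    push_cast; simpa using h
  have hv := congrArg ZMod.val h2
  rw [ZMod.val_cast_of_lt (by have := ZMod.val_lt i; omega),
    ZMod.val_cast_of_lt (by have := ZMod.val_lt k; omega)] at hv
  have : i.val = k.val := by omega
  exact ZMod.val_injective N this

lemma dg_shift (N : ℕ) [NeZero N] (i : ZMod N) :
    2 * (((i+1).val : ℕ) : ZMod (2*N)) = 2 * ((i.val : ℕ) : ZMod (2*N)) + 2 := by
  have hmodN : ((i+1).val : ℕ) ≡ i.val + 1 [MOD N] := by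
    rw [ZMod.val_add, ZMod.val_one_eq_one_mod]
    calc (i.val + 1 % N) % N ≡ i.val + 1 % N [MOD N] := Nat.mod_modEq _ _
      _ ≡ i.val + 1 [MOD N] := Nat.ModEq.add_left _ (Nat.mod_modEq _ _)
  have hmod : (2 * (i+1).val : ℕ) ≡ 2 * (i.val + 1) [MOD 2*N] := hmodN.mul_left' 2
  have hcast : ((2 * (i+1).val : ℕ) : ZMod (2*N)) = ((2 * (i.val + 1) : ℕ) : ZMod (2*N)) :=
    (ZMod.natCast_eq_natCast_iff _ _ _).mpr hmod
  push_cast at hcast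
  rw [hcast]
  ring

lemma dg_sum {A : Type*} [AddCommMonoid A] (N : ℕ) [NeZero N] (g : ℕ → A) :
    ∑ i : ZMod N, g i.val = ∑ j ∈ Finset.range N, g j := by
  refine Finset.sum_nbij' (fun i => i.val) (fun j => (j : ZMod N)) ?_ ?_ ?_ ?_ ?_
  · intro i _; exact Finset.mem_range.mpr (ZMod.val_lt i)
  · intro j _; exact Finset.mem_univ _
  · intro i _; exact ZMod.natCast_zmod_val i
  · intro j hj; exact ZMod.val_cast_of_lt (Finset.mem_range.mp hj)
  · intro i _; rfl

lemma dg_cyc {A : Type*} [AddCommMonoid A] (N : ℕ) [NeZero N] (h : ZMod N → A) :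
    ∑ i : ZMod N, h (i + 1) = ∑ i : ZMod N, h i :=
  Fintype.sum_equiv (Equiv.addRight (1 : ZMod N)) _ _ (fun _ => rfl)

/-- Theorem 1 of the paper.
Let `N ≥ 2` and let `η_1, …, η_{2N}` be elements of an associative unital `ℂ`-algebra,
indexed cyclically mod `2N`, satisfying `η_j η_{j+1} = −η_{j+1} η_j`,
`η_j η_k = η_k η_j` whenever `k ≢ j ± 1 (mod 2N)`, and `η_j² = 1`.
With `A₀ = Σ_{j=1}^{N} η_{2j−1}` and `A₁ = Σ_{j=1}^{N} η_{2j}`, the pair `(A₀, A₁)`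
satisfies the Dolan–Grady condition with constant `C = 16`. -/
theorem dolan_grady_of_eta_relations
    (N : ℕ) (hN : 2 ≤ N) (A : Type*) [Ring A] [Algebra ℂ A]
    (η : ZMod (2 * N) → A)
    (hanti : ∀ j : ZMod (2 * N), η j * η (j + 1) = -(η (j + 1) * η j))
    (hcomm : ∀ j k : ZMod (2 * N), k ≠ j + 1 → k ≠ j - 1 → η j * η k = η k * η j)
    (hsq : ∀ j : ZMod (2 * N), η j ^ 2 = 1)
    (A₀ A₁ : A)
    (hA₀ : A₀ = ∑ j ∈ Finset.range N, η (2 * (j : ZMod (2 * N)) + 1))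
    (hA₁ : A₁ = ∑ j ∈ Finset.range N, η (2 * (j : ZMod (2 * N)) + 2)) :
    ⁅A₀, ⁅A₀, ⁅A₀, A₁⁆⁆⁆ = (16 : ℂ) • ⁅A₀, A₁⁆ ∧
    ⁅A₁, ⁅A₁, ⁅A₁, A₀⁆⁆⁆ = (16 : ℂ) • ⁅A₁, A₀⁆ := by
  haveI : NeZero N := ⟨by omega⟩
  set e : ZMod N → ZMod (2*N) := fun i => ((i.val : ℕ) : ZMod (2*N)) with he
  have hidx1 : ∀ i : ZMod N, 2 * e (i+1) = 2 * e i + 2 := fun i => dg_shift N i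
  have hflip : ∀ p q : A, p * q = -(q * p) → q * p = -(p * q) := by
    intro p q h; rw [h, neg_neg]
  have hsq' : ∀ k : ZMod (2*N), η k * η k = 1 := fun k => by rw [← pow_two, hsq]
  -- sums
  have hsumA₀ : A₀ = ∑ i : ZMod N, η (2 * e i + 1) := by
    rw [hA₀]; exact (dg_sum N (fun n => η (2 * (n : ZMod (2*N)) + 1))).symm
  have hsumA₁ : A₁ = ∑ i : ZMod N, η (2 * e i + 2) := by
    rw [hA₁]; exact (dg_sum N (fun n => η (2 * (n : ZMod (2*N)) + 2))).symm
  have hsumA₀' : A₀ = ∑ i : ZMod N, η (2 * e i + 3) := by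
    rw [hsumA₀, ← dg_cyc N (fun i => η (2 * e i + 1))]
    refine Finset.sum_congr rfl fun i _ => ?_
    show η (2 * e (i+1) + 1) = η (2 * e i + 3)
    exact congrArg η (by rw [hidx1 i]; ring)
  -- relations for (a0, b0) = (odd, even)
  have haa0 : ∀ i k : ZMod N,
      η (2 * e i + 1) * η (2 * e k + 1) = η (2 * e k + 1) * η (2 * e i + 1) := by
    intro i k
    refine hcomm _ _ (fun h => ?_) (fun h => ?_)
    · exact dg_two_mul_ne_one N (e k - e i) (by linear_combination h)
    · exact dg_two_mul_ne_one N (e i - e k) (by linear_combination -h)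
  have hab1_0 : ∀ j : ZMod N,
      η (2 * e j + 2) * η (2 * e j + 1) = -(η (2 * e j + 1) * η (2 * e j + 2)) := by
    intro j
    refine hflip _ _ ?_
    have h := hanti (2 * e j + 1)
    rw [show (2 * e j + 1) + 1 = 2 * e j + 2 by ring] at h
    exact h
  have hab2_0 : ∀ j : ZMod N,
      η (2 * e j + 2) * η (2 * e (j+1) + 1) = -(η (2 * e (j+1) + 1) * η (2 * e j + 2)) := by
    intro j
    have hidx : 2 * e (j+1) + 1 = 2 * e j + 3 := by rw [hidx1 j]; ring
    have h := hanti (2 * e j + 2)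
    rw [show (2 * e j + 2) + 1 = 2 * e j + 3 by ring] at h
    rw [hidx]
    exact h
  have hab3_0 : ∀ i j : ZMod N, i ≠ j → i ≠ j + 1 →
      η (2 * e i + 1) * η (2 * e j + 2) = η (2 * e j + 2) * η (2 * e i + 1) := by
    intro i j h1 h2
    refine hcomm _ _ (fun h => ?_) (fun h => ?_)
    · exact h1.symm (dg_inj N j i (by linear_combination h))
    · refine h2.symm (dg_inj N (j+1) i ?_)
      rw [hidx1 j]
      linear_combination h
  -- relations for (a1, b1) = (even, shifted odd)
  have haa1 : ∀ i k : ZMod N,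
      η (2 * e i + 2) * η (2 * e k + 2) = η (2 * e k + 2) * η (2 * e i + 2) := by
    intro i k
    refine hcomm _ _ (fun h => ?_) (fun h => ?_)
    · exact dg_two_mul_ne_one N (e k - e i) (by linear_combination h)
    · exact dg_two_mul_ne_one N (e i - e k) (by linear_combination -h)
  have hab1_1 : ∀ j : ZMod N,
      η (2 * e j + 3) * η (2 * e j + 2) = -(η (2 * e j + 2) * η (2 * e j + 3)) := by
    intro j
    refine hflip _ _ ?_
    have h := hanti (2 * e j + 2)
    rw [show (2 * e j + 2) + 1 = 2 * e j + 3 by ring] at h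
    exact h
  have hab2_1 : ∀ j : ZMod N,
      η (2 * e j + 3) * η (2 * e (j+1) + 2) = -(η (2 * e (j+1) + 2) * η (2 * e j + 3)) := by
    intro j
    have hidx : 2 * e (j+1) + 2 = 2 * e j + 4 := by rw [hidx1 j]; ring
    have h := hanti (2 * e j + 3)
    rw [show (2 * e j + 3) + 1 = 2 * e j + 4 by ring] at h
    rw [hidx]
    exact h
  have hab3_1 : ∀ i j : ZMod N, i ≠ j → i ≠ j + 1 →
      η (2 * e i + 2) * η (2 * e j + 3) = η (2 * e j + 3) * η (2 * e i + 2) := by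
    intro i j h1 h2
    refine hcomm _ _ (fun h => ?_) (fun h => ?_)
    · exact h1.symm (dg_inj N j i (by linear_combination h))
    · refine h2.symm (dg_inj N (j+1) i ?_)
      rw [hidx1 j]
      linear_combination h
  -- apply the key lemma
  have key0 := dg_key N hN A (fun i => η (2 * e i + 1)) (fun j => η (2 * e j + 2))
    haa0 (fun i => hsq' _) hab1_0 hab2_0 hab3_0
  have key1 := dg_key N hN A (fun i => η (2 * e i + 2)) (fun j => η (2 * e j + 3))
    haa1 (fun i => hsq' _) hab1_1 hab2_1 hab3_1
  have hsmul : ∀ z : A, (16 : ℂ) • z = 16 * z := by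
    intro z; rw [Algebra.smul_def, map_ofNat]
  constructor
  · rw [hsumA₀, hsumA₁, dg_lie_sum, dg_lie_sum, dg_lie_sum, hsmul, Finset.mul_sum]
    exact Finset.sum_congr rfl fun j _ => key0 j
  · rw [hsumA₁, hsumA₀', dg_lie_sum, dg_lie_sum, dg_lie_sum, hsmul, Finset.mul_sum]
    exact Finset.sum_congr rfl fun j _ => key1 j
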